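/- For every merge tree T there exists a path P and a discrete Morse function f on P, all of whose cells are critical, such that the induced merge tree M(P,f) is isomorphic to T; indeed both the induced index-ordered dMf and the induced sublevel-connected dMf on the path with i(T) 1-simplices realize T. -/

import Mathlib

/-- Chirality: left or right. -/
inductive Chir : Type
  | L : Chir
  | R : Chir
  deriving DecidableEq

/-- The opposite chirality. -/
def Chir.other : Chir → Chir
  | .L => .R
  | .R => .L

/-- A merge tree: a full rooted chiral binary tree, encoded by the set of its nodes,
each node being the list of chiralities along the shortest path from the root to it
(the root is the empty list). -/
structure MergeTree : Type where
  nodes : Finset (List Chir)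
  root_mem : [] ∈ nodes
  prefix_closed : ∀ (w : List Chir) (x : Chir), w ++ [x] ∈ nodes → w ∈ nodes
  full : ∀ w : List Chir, w ++ [Chir.L] ∈ nodes ↔ w ++ [Chir.R] ∈ nodes

/-- An inner node: a node with (two) children. -/
def MergeTree.IsInner (T : MergeTree) (n : List Chir) : Prop :=
  n ∈ T.nodes ∧ n ++ [Chir.L] ∈ T.nodes

/-- A leaf node: a node without children. -/
def MergeTree.IsLeaf (T : MergeTree) (n : List Chir) : Prop :=
  n ∈ T.nodes ∧ n ++ [Chir.L] ∉ T.nodes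

/-- The chirality of a node (the root has chirality `L` by convention). -/
def chir (n : List Chir) : Chir := n.getLast?.getD Chir.L

/-- The number of inner nodes of a merge tree. -/
def MergeTree.innerCount (T : MergeTree) : ℕ :=
  (T.nodes.filter fun n => n ++ [Chir.L] ∈ T.nodes).card

/-- Auxiliary comparison of path words; the first argument is the letter at the last
position where the two words agreed (cf. "a_k = b_k"): under a common `L`, the letter
`L` precedes `R`; under a common `R`, `R` precedes `L`; shorter words are larger. -/
def leAux : Chir → List Chir → List Chir → Prop
  | _, _, [] => True
  | _, [], _ :: _ => False
  | last, x :: a, y :: b => if x = y then leAux x a b else x = last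

/-- The sublevel-connected Morse order (comparison of path words; every path word
starts with the letter `L` for the root). -/
def scLe (a b : List Chir) : Prop := leAux Chir.L a b

/-- The index Morse order: leaves below inner nodes; among leaves and among inner
nodes, compare path words. -/
def ioLe (T : MergeTree) (a b : List Chir) : Prop :=
  (T.IsLeaf a ∧ T.IsInner b) ∨
    (((T.IsLeaf a ∧ T.IsLeaf b) ∨ (T.IsInner a ∧ T.IsInner b)) ∧ scLe a b)

/-- The simplex order on the nodes of a merge tree. -/
def simpLe (a b : List Chir) : Prop :=
  a = b ∨ (b ++ [Chir.L]) <+: a ∨ (a ++ [Chir.R]) <+: b ∨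
    ∃ p : List Chir, (p ++ [Chir.L]) <+: a ∧ (p ++ [Chir.R]) <+: b

/-- A Morse order on a merge tree: a total order on the nodes that attains its maximum
at the root of each subtree and its minimum inside the child-subtree matching the
chirality of the root of the subtree. -/
def IsMorseOrder (T : MergeTree) (r : List Chir → List Chir → Prop) : Prop :=
  (∀ a ∈ T.nodes, r a a) ∧
  (∀ a ∈ T.nodes, ∀ b ∈ T.nodes, r a b → r b a → a = b) ∧
  (∀ a ∈ T.nodes, ∀ b ∈ T.nodes, ∀ c ∈ T.nodes, r a b → r b c → r a c) ∧
  (∀ a ∈ T.nodes, ∀ b ∈ T.nodes, r a b ∨ r b a) ∧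
  (∀ p ∈ T.nodes, ∀ n ∈ T.nodes, p <+: n → r n p) ∧
  (∀ p : List Chir, T.IsInner p → ∃ m ∈ T.nodes, (p ++ [chir p]) <+: m ∧
      ∀ n ∈ T.nodes, p <+: n → r m n)

/-- The Morse labeling induced by an order `r`: the unique order isomorphism from the
nodes of `T` onto `{0, 1, …, 2·i(T)}`. -/
def IsMorseLabeling (T : MergeTree) (r : List Chir → List Chir → Prop)
    (lab : List Chir → ℕ) : Prop :=
  (∀ n ∈ T.nodes, lab n < 2 * T.innerCount + 1) ∧
  (∀ k : ℕ, k < 2 * T.innerCount + 1 → ∃ n ∈ T.nodes, lab n = k) ∧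
  (∀ a ∈ T.nodes, ∀ b ∈ T.nodes, lab a = lab b → a = b) ∧
  (∀ a ∈ T.nodes, ∀ b ∈ T.nodes, (r a b ↔ lab a ≤ lab b))

/-- An order-preserving bijection from the simplices of a path with `i(T)` 1-simplices
(concretely: `Fin (2·i(T)+1)` with its linear order, which is the simplex order coming
from an orientation) to the nodes of `T` with the simplex order. -/
def IsSimplexIso (T : MergeTree) (φ : Fin (2 * T.innerCount + 1) → List Chir) : Prop :=
  (∀ i, φ i ∈ T.nodes) ∧
  (∀ n ∈ T.nodes, ∃ i, φ i = n) ∧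
  (∀ i j, i ≤ j ↔ simpLe (φ i) (φ j))

/-- A discrete Morse function, with only critical cells, on a path whose simplices are
listed left to right as `Fin N` (even indices are vertices, odd indices are edges):
injective and weakly increasing from a vertex to an incident edge. -/
def IsPathDMFallCrit {N : ℕ} {α : Type*} [LinearOrder α] (f : Fin N → α) : Prop :=
  Function.Injective f ∧
  ∀ j : ℕ, ∀ h : 2 * j + 2 < N,
    f ⟨2 * j, by omega⟩ ≤ f ⟨2 * j + 1, by omega⟩ ∧
    f ⟨2 * j + 2, by omega⟩ ≤ f ⟨2 * j + 1, by omega⟩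

/-- `(T, ν)` is the Morse labeled merge tree induced by a dMf `f` (with only critical
cells) on a path whose simplices are `Fin N` listed left to right: `ν` assigns to each
node of `T` its corresponding critical simplex; the root corresponds to the maximal
critical edge; the children of an inner node correspond to the maxima of `f` on the two
connected components of the strict sublevel complex adjacent to the corresponding edge,
the component containing the smaller minimum inheriting the parent's chirality.  The
canonical labeling of the induced Ml tree is `f ∘ ν`. -/
def InducedMlPath {N : ℕ} {α : Type*} [LinearOrder α] (f : Fin N → α)
    (T : MergeTree) (ν : List Chir → Fin N) : Prop :=
  (∀ n ∈ T.nodes, ∀ n' ∈ T.nodes, ν n = ν n' → n = n') ∧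
  (∀ n ∈ T.nodes, (T.IsLeaf n ↔ (ν n).1 % 2 = 0)) ∧
  ((∃ i : Fin N, i.1 % 2 = 1) →
    T.IsInner [] ∧ ∀ i : Fin N, i.1 % 2 = 1 → f i ≤ f (ν [])) ∧
  ((¬ ∃ i : Fin N, i.1 % 2 = 1) → T.nodes = {([] : List Chir)}) ∧
  (∀ n : List Chir, T.IsInner n → (ν n).1 % 2 = 1 ∧
    ∃ lo hi : Fin N, lo.1 < (ν n).1 ∧ (ν n).1 < hi.1 ∧
      (∀ i : Fin N, lo.1 ≤ i.1 → i.1 < (ν n).1 → f i < f (ν n)) ∧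
      (∀ i : Fin N, (ν n).1 < i.1 → i.1 ≤ hi.1 → f i < f (ν n)) ∧
      (∀ i : Fin N, i.1 + 1 = lo.1 → f (ν n) ≤ f i) ∧
      (∀ i : Fin N, hi.1 + 1 = i.1 → f (ν n) ≤ f i) ∧
      ∃ il ir : Fin N, lo.1 ≤ il.1 ∧ il.1 < (ν n).1 ∧ (ν n).1 < ir.1 ∧ ir.1 ≤ hi.1 ∧
        (∀ i : Fin N, lo.1 ≤ i.1 → i.1 < (ν n).1 → f i ≤ f il) ∧
        (∀ i : Fin N, (ν n).1 < i.1 → i.1 ≤ hi.1 → f i ≤ f ir) ∧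
        ∃ ml mr : Fin N, lo.1 ≤ ml.1 ∧ ml.1 < (ν n).1 ∧ (ν n).1 < mr.1 ∧ mr.1 ≤ hi.1 ∧
          (∀ i : Fin N, lo.1 ≤ i.1 → i.1 < (ν n).1 → f ml ≤ f i) ∧
          (∀ i : Fin N, (ν n).1 < i.1 → i.1 ≤ hi.1 → f mr ≤ f i) ∧
          ((f ml < f mr ∧ ν (n ++ [chir n]) = il ∧ ν (n ++ [(chir n).other]) = ir) ∨
           (f mr < f ml ∧ ν (n ++ [chir n]) = ir ∧ ν (n ++ [(chir n).other]) = il)))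

section Sec1

/-! ### Basic facts about `leAux` / `scLe` -/

lemma chir_ne_other (x : Chir) : x ≠ x.other := by cases x <;> simp [Chir.other]

def leAuxB : Chir → List Chir → List Chir → Bool
  | _, _, [] => true
  | _, [], _ :: _ => false
  | last, x :: a, y :: b => if x = y then leAuxB x a b else x == last

lemma leAux_iff : ∀ last a b, leAux last a b ↔ leAuxB last a b = true
  | _, _, [] => by simp [leAux, leAuxB]
  | _, [], _ :: _ => by simp [leAux, leAuxB]
  | last, x :: a, y :: b => by
    by_cases h : x = y
    · simp [leAux, leAuxB, h, leAux_iff y a b]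
    · simp [leAux, leAuxB, h]

instance : DecidableRel scLe := fun a b => decidable_of_iff _ (leAux_iff Chir.L a b).symm

lemma leAux_nil (last : Chir) (a : List Chir) : leAux last a [] := by
  cases a <;> exact trivial

lemma leAux_refl : ∀ last a, leAux last a a
  | last, [] => leAux_nil last []
  | last, x :: a => by simpa [leAux] using leAux_refl x a

lemma leAux_of_prefix : ∀ (last : Chir) (a b : List Chir), b <+: a → leAux last a b
  | last, a, [], _ => leAux_nil last a
  | last, [], y :: b, h => by simp at h
  | last, x :: a, y :: b, h => by
    obtain ⟨t, ht⟩ := h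
    simp only [List.cons_append, List.cons.injEq] at ht
    obtain ⟨hy, ht⟩ := ht
    subst hy
    simpa [leAux] using leAux_of_prefix y a b ⟨t, ht⟩

lemma leAux_total : ∀ last a b, leAux last a b ∨ leAux last b a
  | last, a, [] => Or.inl (leAux_nil last a)
  | _, [], _ :: _ => Or.inr trivial
  | last, x :: a, y :: b => by
    by_cases h : x = y
    · subst h
      simpa [leAux] using leAux_total x a b
    · have h' : ¬ y = x := fun e => h e.symm
      simp only [leAux, if_neg h, if_neg h']
      cases x <;> cases y <;> cases last <;> simp_all

lemma leAux_antisymm : ∀ last a b, leAux last a b → leAux last b a → a = b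
  | _, [], [], _, _ => rfl
  | _, [], y :: b, h1, _ => absurd h1 (by simp [leAux])
  | _, x :: a, [], _, h2 => absurd h2 (by simp [leAux])
  | last, x :: a, y :: b, h1, h2 => by
    by_cases h : x = y
    · subst h
      simp only [leAux, if_pos rfl] at h1 h2
      rw [leAux_antisymm x a b h1 h2]
    · have h' : ¬ y = x := fun e => h e.symm
      simp only [leAux, if_neg h, if_neg h'] at h1 h2
      exact absurd (h1.trans h2.symm) h

lemma leAux_trans : ∀ last a b c, leAux last a b → leAux last b c → leAux last a c
  | last, a, _, [], _, _ => leAux_nil last a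
  | _, _, [], z :: c, _, h2 => absurd h2 (by simp [leAux])
  | _, [], y :: b, z :: c, h1, _ => absurd h1 (by simp [leAux])
  | last, x :: a, y :: b, z :: c, h1, h2 => by
    by_cases hxy : x = y <;> by_cases hyz : y = z
    · subst hxy; subst hyz
      simp only [leAux, if_pos rfl] at *
      exact leAux_trans x a b c h1 h2
    · subst hxy
      have : ¬ x = z := hyz
      simp only [leAux, if_pos rfl, if_neg hyz] at h2 ⊢
      exact h2
    · subst hyz
      simp only [leAux, if_neg hxy] at h1 ⊢
      exact h1
    · simp only [leAux, if_neg hxy, if_neg hyz] at h1 h2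
      subst h1; subst h2
      exact absurd rfl hxy

lemma scLe_refl (a : List Chir) : scLe a a := leAux_refl _ a
lemma scLe_of_prefix {a b : List Chir} (h : b <+: a) : scLe a b := leAux_of_prefix _ a b h
lemma scLe_total (a b : List Chir) : scLe a b ∨ scLe b a := leAux_total _ a b
lemma scLe_antisymm {a b : List Chir} (h1 : scLe a b) (h2 : scLe b a) : a = b :=
  leAux_antisymm _ a b h1 h2
lemma scLe_trans {a b c : List Chir} (h1 : scLe a b) (h2 : scLe b c) : scLe a c :=
  leAux_trans _ a b c h1 h2

/-- chirAux: the last letter of `n`, defaulting to `last`. -/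
def chirAux (last : Chir) (n : List Chir) : Chir := n.getLast?.getD last

lemma chirAux_cons (last x : Chir) (n : List Chir) :
    chirAux last (x :: n) = chirAux x n := by
  cases n with
  | nil => simp [chirAux]
  | cons y m =>
    show ((x :: y :: m).getLast?).getD last = ((y :: m).getLast?).getD x
    rw [List.getLast?_cons_cons]
    cases h : (y :: m).getLast? with
    | none => simp at h
    | some z => simp

lemma chir_eq_chirAux (n : List Chir) : chir n = chirAux Chir.L n := rfl

/-- elements of the `chirAux`-side subtree precede elements of the other side. -/
lemma leAux_chir_side : ∀ (last : Chir) (n s1 s2 : List Chir),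
    leAux last (n ++ chirAux last n :: s1) (n ++ (chirAux last n).other :: s2)
  | last, [], s1, s2 => by
    have h : chirAux last [] = last := rfl
    simp only [List.nil_append, h, leAux, if_neg (chir_ne_other last)]
  | last, x :: n, s1, s2 => by
    rw [chirAux_cons]
    simpa [leAux] using leAux_chir_side x n s1 s2

lemma scLe_chir_side (n s1 s2 : List Chir) :
    scLe (n ++ chir n :: s1) (n ++ (chir n).other :: s2) := by
  rw [chir_eq_chirAux]; exact leAux_chir_side Chir.L n s1 s2

end Sec1

section Sec2

/-! ### Recursive characterization of `simpLe` -/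

def sLeB : List Chir → List Chir → Bool
  | [], [] => true
  | [], y :: _ => y == Chir.R
  | x :: _, [] => x == Chir.L
  | x :: a, y :: b => if x = y then sLeB a b else x == Chir.L

lemma simpLe_iff : ∀ a b, simpLe a b ↔ sLeB a b = true
  | [], [] => by simp [simpLe, sLeB]
  | [], y :: b => by
    simp only [simpLe, sLeB]
    constructor
    · rintro (h | h | h | ⟨p, h1, h2⟩)
      · exact absurd h (by simp)
      · exact absurd h.length_le (by simp)
      · obtain ⟨t, ht⟩ := h
        simp only [List.nil_append, List.cons_append] at ht
        cases ht
        simp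
      · exact absurd h1.length_le (by simp)
    · intro h
      have : y = Chir.R := by cases y <;> simp_all
      subst this
      exact Or.inr (Or.inr (Or.inl ⟨b, rfl⟩))
  | x :: a, [] => by
    simp only [simpLe, sLeB]
    constructor
    · rintro (h | h | h | ⟨p, h1, h2⟩)
      · exact absurd h (by simp)
      · obtain ⟨t, ht⟩ := h
        simp only [List.nil_append, List.cons_append] at ht
        cases ht
        simp
      · exact absurd h.length_le (by simp)
      · exact absurd h2.length_le (by simp)
    · intro h
      have : x = Chir.L := by cases x <;> simp_all
      subst this
      exact Or.inr (Or.inl ⟨a, rfl⟩)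
  | x :: a, y :: b => by
    by_cases hxy : x = y
    · subst hxy
      rw [show sLeB (x :: a) (x :: b) = sLeB a b from by simp [sLeB],
        ← simpLe_iff a b]
      simp only [simpLe]
      constructor
      · rintro (h | h | h | ⟨p, h1, h2⟩)
        · cases h; exact Or.inl rfl
        · obtain ⟨t, ht⟩ := h
          simp only [List.cons_append, List.cons.injEq] at ht
          exact Or.inr (Or.inl ⟨t, ht.2⟩)
        · obtain ⟨t, ht⟩ := h
          simp only [List.cons_append, List.cons.injEq] at ht
          exact Or.inr (Or.inr (Or.inl ⟨t, ht.2⟩))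
        · -- p case: p must be x :: p'
          cases p with
          | nil =>
            obtain ⟨t1, ht1⟩ := h1
            obtain ⟨t2, ht2⟩ := h2
            simp only [List.nil_append, List.cons_append] at ht1 ht2
            cases ht1; cases ht2
          | cons w p' =>
            obtain ⟨t1, ht1⟩ := h1
            obtain ⟨t2, ht2⟩ := h2
            simp only [List.cons_append, List.cons.injEq] at ht1 ht2
            obtain ⟨rfl, ht1⟩ := ht1
            obtain ⟨-, ht2⟩ := ht2
            exact Or.inr (Or.inr (Or.inr ⟨p', ⟨t1, ht1⟩, ⟨t2, ht2⟩⟩))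
      · rintro (rfl | ⟨t, ht⟩ | ⟨t, ht⟩ | ⟨p, ⟨t1, ht1⟩, ⟨t2, ht2⟩⟩)
        · exact Or.inl rfl
        · exact Or.inr (Or.inl ⟨t, by simp [← ht]⟩)
        · exact Or.inr (Or.inr (Or.inl ⟨t, by simp [← ht]⟩))
        · exact Or.inr (Or.inr (Or.inr ⟨x :: p, ⟨t1, by simp [← ht1]⟩, ⟨t2, by simp [← ht2]⟩⟩))
    · rw [show sLeB (x :: a) (y :: b) = (x == Chir.L) from by simp [sLeB, if_neg hxy]]
      simp only [simpLe]
      constructor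
      · rintro (h | h | h | ⟨p, h1, h2⟩)
        · cases h; exact absurd rfl hxy
        · obtain ⟨t, ht⟩ := h
          simp only [List.cons_append, List.cons.injEq] at ht
          exact absurd ht.1.symm hxy
        · obtain ⟨t, ht⟩ := h
          simp only [List.cons_append, List.cons.injEq] at ht
          exact absurd ht.1 hxy
        · cases p with
          | nil =>
            obtain ⟨t1, ht1⟩ := h1
            obtain ⟨t2, ht2⟩ := h2
            simp only [List.nil_append, List.cons_append, List.cons.injEq] at ht1 ht2
            rw [← ht1.1]; simp
          | cons w p' =>
            obtain ⟨t1, ht1⟩ := h1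
            obtain ⟨t2, ht2⟩ := h2
            simp only [List.cons_append, List.cons.injEq] at ht1 ht2
            exact absurd (ht1.1.symm.trans ht2.1) hxy
      · intro h
        have hx : x = Chir.L := by cases x <;> simp_all
        have hy : y = Chir.R := by cases x <;> cases y <;> simp_all
        subst hx; subst hy
        exact Or.inr (Or.inr (Or.inr ⟨[], ⟨a, rfl⟩, ⟨b, rfl⟩⟩))

instance : DecidableRel simpLe := fun a b => decidable_of_iff _ (simpLe_iff a b).symm

def SLe (a b : List Chir) : Prop := sLeB a b = true

lemma sLe_refl : ∀ a, SLe a a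
  | [] => rfl
  | x :: a => by simpa [SLe, sLeB] using sLe_refl a

lemma sLe_total : ∀ a b, SLe a b ∨ SLe b a
  | [], [] => Or.inl rfl
  | [], y :: b => by unfold SLe sLeB; cases y <;> simp
  | x :: a, [] => by unfold SLe sLeB; cases x <;> simp
  | x :: a, y :: b => by
    by_cases h : x = y
    · subst h; simpa [SLe, sLeB] using sLe_total a b
    · have h' : ¬ y = x := fun e => h e.symm
      unfold SLe sLeB
      simp only [if_neg h, if_neg h']
      cases x <;> cases y <;> simp_all

lemma sLe_antisymm : ∀ a b, SLe a b → SLe b a → a = b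
  | [], [], _, _ => rfl
  | [], y :: b, h1, h2 => by
    unfold SLe sLeB at h1 h2; cases y <;> simp_all
  | x :: a, [], h1, h2 => by
    unfold SLe sLeB at h1 h2; cases x <;> simp_all
  | x :: a, y :: b, h1, h2 => by
    by_cases h : x = y
    · subst h
      simp only [SLe, sLeB, if_pos rfl] at h1 h2
      rw [sLe_antisymm a b h1 h2]
    · have h' : ¬ y = x := fun e => h e.symm
      unfold SLe sLeB at h1 h2
      simp only [if_neg h, if_neg h'] at h1 h2
      cases x <;> cases y <;> simp_all

lemma SLe_cons_cons (x y : Chir) (a b : List Chir) :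
    SLe (x :: a) (y :: b) ↔ (if x = y then SLe a b else x = Chir.L) := by
  unfold SLe
  show (if x = y then sLeB a b else x == Chir.L) = true ↔ _
  split <;> simp

lemma SLe_nil_cons (y : Chir) (b : List Chir) : SLe [] (y :: b) ↔ y = Chir.R := by
  unfold SLe; show (y == Chir.R) = true ↔ _; simp

lemma SLe_cons_nil (x : Chir) (a : List Chir) : SLe (x :: a) [] ↔ x = Chir.L := by
  unfold SLe; show (x == Chir.L) = true ↔ _; simp

lemma sLe_trans : ∀ a b c, SLe a b → SLe b c → SLe a c
  | [], [], _, _, h2 => h2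
  | [], _ :: _, [], _, _ => rfl
  | [], y :: b, z :: c, h1, h2 => by
    rw [SLe_nil_cons] at h1 ⊢
    rw [SLe_cons_cons] at h2
    subst h1
    by_cases h : Chir.R = z
    · exact h.symm
    · rw [if_neg h] at h2; exact absurd h2 (by decide)
  | x :: a, [], [], h1, _ => h1
  | x :: a, [], z :: c, h1, h2 => by
    rw [SLe_cons_nil] at h1
    rw [SLe_nil_cons] at h2
    rw [SLe_cons_cons]
    subst h1; subst h2
    rw [if_neg (by decide)]
  | x :: a, y :: b, [], h1, h2 => by
    rw [SLe_cons_cons] at h1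
    rw [SLe_cons_nil] at h2 ⊢
    by_cases h : x = y
    · exact h ▸ h2
    · rwa [if_neg h] at h1
  | x :: a, y :: b, z :: c, h1, h2 => by
    rw [SLe_cons_cons] at h1 h2 ⊢
    by_cases hxy : x = y <;> by_cases hyz : y = z
    · subst hxy; subst hyz
      rw [if_pos rfl] at h1 h2 ⊢
      exact sLe_trans a b c h1 h2
    · subst hxy
      rw [if_pos rfl] at h1
      rw [if_neg hyz] at h2 ⊢
      exact h2
    · subst hyz
      rw [if_neg hxy] at h1 ⊢
      exact h1
    · rw [if_neg hxy] at h1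
      rw [if_neg hyz] at h2
      exact absurd (h1.trans h2.symm) hxy

/-- Interval property: anything between two elements of the subtree of `n` is in
the subtree of `n`. -/
lemma sLe_interval : ∀ (n a b c : List Chir), n <+: a → n <+: c → SLe a b → SLe b c →
    n <+: b
  | [], _, _, _, _, _, _, _ => List.nil_prefix
  | x :: n', a, b, c, ha, hc, h1, h2 => by
    obtain ⟨ta, rfl⟩ := ha
    obtain ⟨tc, rfl⟩ := hc
    cases b with
    | nil =>
      rw [show ((x :: n') ++ ta : List Chir) = x :: (n' ++ ta) from rfl,
        SLe_cons_nil] at h1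
      rw [show ((x :: n') ++ tc : List Chir) = x :: (n' ++ tc) from rfl,
        SLe_nil_cons] at h2
      subst h1; exact absurd h2 (by decide)
    | cons y b' =>
      rw [show ((x :: n') ++ ta : List Chir) = x :: (n' ++ ta) from rfl,
        SLe_cons_cons] at h1
      rw [show ((x :: n') ++ tc : List Chir) = x :: (n' ++ tc) from rfl,
        SLe_cons_cons] at h2
      by_cases h : x = y
      · subst h
        rw [if_pos rfl] at h1 h2
        obtain ⟨t, rfl⟩ := sLe_interval n' _ b' _ ⟨ta, rfl⟩ ⟨tc, rfl⟩ h1 h2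
        exact ⟨t, rfl⟩
      · rw [if_neg h] at h1
        rw [if_neg (fun e => h e.symm)] at h2
        exact absurd (h1.trans h2.symm) h

lemma prefix_cases {n m : List Chir} (h : n <+: m) :
    m = n ∨ (n ++ [Chir.L]) <+: m ∨ (n ++ [Chir.R]) <+: m := by
  obtain ⟨t, rfl⟩ := h
  cases t with
  | nil => exact Or.inl (by simp)
  | cons x t' =>
    cases x
    · exact Or.inr (Or.inl ⟨t', by simp⟩)
    · exact Or.inr (Or.inr ⟨t', by simp⟩)

lemma simpLe_refl (a : List Chir) : simpLe a a := Or.inl rfl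

lemma simpLe_of_left {n a : List Chir} (h : (n ++ [Chir.L]) <+: a) : simpLe a n :=
  Or.inr (Or.inl h)

lemma simpLe_of_right {n b : List Chir} (h : (n ++ [Chir.R]) <+: b) : simpLe n b :=
  Or.inr (Or.inr (Or.inl h))

lemma simpLe_trans {a b c : List Chir} (h1 : simpLe a b) (h2 : simpLe b c) : simpLe a c :=
  (simpLe_iff _ _).2 (sLe_trans a b c ((simpLe_iff _ _).1 h1) ((simpLe_iff _ _).1 h2))

lemma simpLe_antisymm {a b : List Chir} (h1 : simpLe a b) (h2 : simpLe b a) : a = b :=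
  sLe_antisymm a b ((simpLe_iff _ _).1 h1) ((simpLe_iff _ _).1 h2)

lemma simpLe_total (a b : List Chir) : simpLe a b ∨ simpLe b a := by
  rcases sLe_total a b with h | h
  · exact Or.inl ((simpLe_iff _ _).2 h)
  · exact Or.inr ((simpLe_iff _ _).2 h)

lemma simpLe_interval {n a b c : List Chir} (ha : n <+: a) (hc : n <+: c)
    (h1 : simpLe a b) (h2 : simpLe b c) : n <+: b :=
  sLe_interval n a b c ha hc ((simpLe_iff _ _).1 h1) ((simpLe_iff _ _).1 h2)

instance : IsTrans (List Chir) simpLe := ⟨fun _ _ _ => simpLe_trans⟩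
instance : IsAntisymm (List Chir) simpLe := ⟨fun _ _ => simpLe_antisymm⟩
instance : IsTotal (List Chir) simpLe := ⟨simpLe_total⟩
instance : IsRefl (List Chir) simpLe := ⟨simpLe_refl⟩

end Sec2

section Sec3

variable (T : MergeTree)

/-! ### Tree lemmas -/

lemma mem_of_prefix : ∀ (v : List Chir), v ∈ T.nodes → ∀ u, u <+: v → u ∈ T.nodes := by
  intro v
  induction v using List.reverseRecOn with
  | nil =>
    intro hv u hu
    rw [List.prefix_nil] at hu
    exact hu ▸ hv
  | append_singleton w x ih =>
    intro hv u hu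
    rcases List.prefix_concat_iff.1 hu with rfl | hu
    · exact hv
    · exact ih (T.prefix_closed w x hv) u hu

lemma child_mem {n : List Chir} (h : T.IsInner n) (x : Chir) : n ++ [x] ∈ T.nodes := by
  cases x
  · exact h.2
  · exact (T.full n).1 h.2

lemma leaf_or_inner {n : List Chir} (h : n ∈ T.nodes) : T.IsLeaf n ∨ T.IsInner n := by
  by_cases h2 : n ++ [Chir.L] ∈ T.nodes
  · exact Or.inr ⟨h, h2⟩
  · exact Or.inl ⟨h, h2⟩

lemma not_leaf_and_inner {n : List Chir} : ¬ (T.IsLeaf n ∧ T.IsInner n) := by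
  rintro ⟨⟨-, h1⟩, -, h2⟩; exact h1 h2

lemma desc_eq_of_leaf {n m : List Chir} (hl : T.IsLeaf n) (hm : m ∈ T.nodes)
    (h : n <+: m) : m = n := by
  rcases prefix_cases h with rfl | h | h
  · rfl
  · exact absurd (mem_of_prefix T m hm _ h) hl.2
  · exact absurd ((T.full n).2 (mem_of_prefix T m hm _ h)) hl.2

lemma exists_leaf_desc {n : List Chir} (hn : n ∈ T.nodes) :
    ∃ u ∈ T.nodes, n <+: u ∧ T.IsLeaf u := by
  classical
  have hne : (T.nodes.filter (fun m => n <+: m)).Nonempty :=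
    ⟨n, Finset.mem_filter.2 ⟨hn, List.prefix_refl n⟩⟩
  obtain ⟨u, hu, hmax⟩ := Finset.exists_max_image _ (fun m => m.length) hne
  rw [Finset.mem_filter] at hu
  refine ⟨u, hu.1, hu.2, hu.1, fun hL => ?_⟩
  have h2 : u ++ [Chir.L] ∈ T.nodes.filter (fun m => n <+: m) :=
    Finset.mem_filter.2 ⟨hL, hu.2.trans ⟨[Chir.L], rfl⟩⟩
  have := hmax _ h2
  simp at this

lemma root_inner_of_inner {m : List Chir} (h : T.IsInner m) : T.IsInner [] := by
  refine ⟨T.root_mem, ?_⟩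
  cases m with
  | nil => exact h.2
  | cons x m' =>
    have hx : [x] ∈ T.nodes := mem_of_prefix T _ h.1 [x] ⟨m', rfl⟩
    cases x
    · exact hx
    · exact (T.full []).2 hx

lemma card_nodes : T.nodes.card = 2 * T.innerCount + 1 := by
  classical
  set Inn := T.nodes.filter (fun n => n ++ [Chir.L] ∈ T.nodes) with hInn
  have hL : ∀ x : Chir, Function.Injective (fun n : List Chir => n ++ [x]) := by
    intro x a b hab
    simpa using hab
  have hsplit : T.nodes.erase [] = Inn.image (fun n => n ++ [Chir.L]) ∪
      Inn.image (fun n => n ++ [Chir.R]) := by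
    ext m
    simp only [Finset.mem_erase, Finset.mem_union, Finset.mem_image, hInn,
      Finset.mem_filter]
    constructor
    · rintro ⟨hne, hm⟩
      obtain ⟨w, x, rfl⟩ : ∃ w x, m = w ++ [x] := by
        rcases List.eq_nil_or_concat m with rfl | ⟨w, x, rfl⟩
        · exact absurd rfl hne
        · exact ⟨w, x, by simp⟩
      have hw : w ∈ T.nodes := T.prefix_closed w x hm
      cases x
      · exact Or.inl ⟨w, ⟨hw, hm⟩, rfl⟩
      · exact Or.inr ⟨w, ⟨hw, (T.full w).2 hm⟩, rfl⟩
    · rintro (⟨w, ⟨hw, hwL⟩, rfl⟩ | ⟨w, ⟨hw, hwL⟩, rfl⟩)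
      · exact ⟨by simp, hwL⟩
      · exact ⟨by simp, (T.full w).1 hwL⟩
  have hdisj : Disjoint (Inn.image (fun n => n ++ [Chir.L]))
      (Inn.image (fun n => n ++ [Chir.R])) := by
    rw [Finset.disjoint_left]
    rintro m hmL hmR
    obtain ⟨a, -, rfl⟩ := Finset.mem_image.1 hmL
    obtain ⟨b, -, hba⟩ := Finset.mem_image.1 hmR
    have := congrArg (fun l => l.getLast?) hba
    simp at this
  have hcard : (T.nodes.erase []).card = 2 * T.innerCount := by
    rw [hsplit, Finset.card_union_of_disjoint hdisj,
      Finset.card_image_of_injective _ (hL Chir.L),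
      Finset.card_image_of_injective _ (hL Chir.R)]
    unfold MergeTree.innerCount
    rw [hInn]
    omega
  have := Finset.card_erase_of_mem T.root_mem
  have hpos : 0 < T.nodes.card := Finset.card_pos.2 ⟨[], T.root_mem⟩
  omega

end Sec3

section Sec4

/-! ### Rank machinery -/

variable {r : List Chir → List Chir → Prop} [DecidableRel r] {S : Finset (List Chir)}

/-- Structure bundling the linear-order axioms for a global relation. -/
structure IsLin (r : List Chir → List Chir → Prop) : Prop where
  refl : ∀ a, r a a
  trans : ∀ a b c, r a b → r b c → r a c
  antisymm : ∀ a b, r a b → r b a → a = b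
  total : ∀ a b, r a b ∨ r b a

/-- The rank of `n` in `S` w.r.t. `r`. -/
def rnk (S : Finset (List Chir)) (r : List Chir → List Chir → Prop) [DecidableRel r]
    (n : List Chir) : ℕ :=
  (S.filter (fun m => r m n ∧ m ≠ n)).card

lemma rnk_le_iff (hr : IsLin r) {a b : List Chir} (ha : a ∈ S) (hb : b ∈ S) :
    r a b ↔ rnk S r a ≤ rnk S r b := by
  classical
  constructor
  · intro hab
    apply Finset.card_le_card
    intro m hm
    rw [Finset.mem_filter] at hm ⊢
    obtain ⟨hmS, hma, hne⟩ := hm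
    refine ⟨hmS, hr.trans _ _ _ hma hab, fun e => ?_⟩
    subst e
    exact hne (hr.antisymm _ _ hab hma).symm
  · intro hle
    by_contra hab
    have hne : a ≠ b := fun e => hab (e ▸ hr.refl a)
    have hba : r b a := (hr.total a b).resolve_left hab
    have hsub : insert b (S.filter (fun m => r m b ∧ m ≠ b)) ⊆
        S.filter (fun m => r m a ∧ m ≠ a) := by
      intro m hm
      rw [Finset.mem_insert] at hm
      rcases hm with rfl | hm
      · exact Finset.mem_filter.2 ⟨hb, hba, fun e => hne e.symm⟩
      · rw [Finset.mem_filter] at hm ⊢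
        obtain ⟨hmS, hmb, hneb⟩ := hm
        refine ⟨hmS, hr.trans _ _ _ hmb hba, fun e => ?_⟩
        subst e
        exact hab hmb
    have hcard := Finset.card_le_card hsub
    rw [Finset.card_insert_of_notMem (fun h => (Finset.mem_filter.1 h).2.2 rfl)] at hcard
    unfold rnk at hle
    omega

lemma rnk_inj (hr : IsLin r) {a b : List Chir} (ha : a ∈ S) (hb : b ∈ S)
    (h : rnk S r a = rnk S r b) : a = b := by
  apply hr.antisymm
  · exact (rnk_le_iff hr ha hb).2 h.le
  · exact (rnk_le_iff hr hb ha).2 h.ge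

lemma rnk_lt_card (hr : IsLin r) {n : List Chir} (hn : n ∈ S) : rnk S r n < S.card := by
  classical
  have : S.filter (fun m => r m n ∧ m ≠ n) ⊆ S.erase n := by
    intro m hm
    rw [Finset.mem_filter] at hm
    exact Finset.mem_erase.2 ⟨hm.2.2, hm.1⟩
  have h1 := Finset.card_le_card this
  have h2 := Finset.card_erase_of_mem hn
  have hpos : 0 < S.card := Finset.card_pos.2 ⟨n, hn⟩
  unfold rnk
  omega

lemma rnk_surj (hr : IsLin r) {k : ℕ} (hk : k < S.card) :
    ∃ n ∈ S, rnk S r n = k := by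
  classical
  have himg : S.image (rnk S r) = Finset.range S.card := by
    apply Finset.eq_of_subset_of_card_le
    · intro x hx
      obtain ⟨n, hn, rfl⟩ := Finset.mem_image.1 hx
      exact Finset.mem_range.2 (rnk_lt_card hr hn)
    · rw [Finset.card_range, Finset.card_image_of_injOn (fun a ha b hb => rnk_inj hr ha hb)]
  have : k ∈ S.image (rnk S r) := himg ▸ Finset.mem_range.2 hk
  obtain ⟨n, hn, hnk⟩ := Finset.mem_image.1 this
  exact ⟨n, hn, hnk⟩

lemma rnk_lt_iff (hr : IsLin r) {a b : List Chir} (ha : a ∈ S) (hb : b ∈ S) :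
    (r a b ∧ a ≠ b) ↔ rnk S r a < rnk S r b := by
  constructor
  · rintro ⟨h, hne⟩
    rcases Nat.lt_or_ge (rnk S r a) (rnk S r b) with h' | h'
    · exact h'
    · exact absurd (rnk_inj hr ha hb (Nat.le_antisymm ((rnk_le_iff hr ha hb).1 h) h')) hne
  · intro h
    refine ⟨(rnk_le_iff hr ha hb).2 h.le, fun e => ?_⟩
    subst e; omega

/-! ### The global index order -/

def ioLe' (T : MergeTree) (a b : List Chir) : Prop :=
  (a ++ [Chir.L] ∉ T.nodes ∧ b ++ [Chir.L] ∈ T.nodes) ∨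
    (((a ++ [Chir.L] ∈ T.nodes) ↔ (b ++ [Chir.L] ∈ T.nodes)) ∧ scLe a b)

instance (T : MergeTree) : DecidableRel (ioLe' T) := fun a b => by
  unfold ioLe'; infer_instance

lemma ioLe'_lin (T : MergeTree) : IsLin (ioLe' T) := by
  constructor
  · intro a
    exact Or.inr ⟨Iff.rfl, scLe_refl a⟩
  · intro a b c h1 h2
    unfold ioLe' at *
    rcases h1 with ⟨ha, hb⟩ | ⟨hab, hsc1⟩ <;> rcases h2 with ⟨hb', hc⟩ | ⟨hbc, hsc2⟩
    · exact Or.inl ⟨ha, hc⟩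
    · exact Or.inl ⟨ha, hbc.1 hb⟩
    · exact Or.inl ⟨fun h => hb' (hab.1 h), hc⟩
    · exact Or.inr ⟨hab.trans hbc, scLe_trans hsc1 hsc2⟩
  · intro a b h1 h2
    unfold ioLe' at *
    rcases h1 with ⟨ha, hb⟩ | ⟨hab, hsc1⟩ <;> rcases h2 with ⟨hb', hc⟩ | ⟨hbc, hsc2⟩
    · exact absurd hb hb'
    · exact absurd (hbc.1 hb) ha
    · exact absurd (hab.1 hc) hb'
    · exact scLe_antisymm hsc1 hsc2
  · intro a b
    unfold ioLe'
    by_cases ha : a ++ [Chir.L] ∈ T.nodes <;> by_cases hb : b ++ [Chir.L] ∈ T.nodes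
    · rcases scLe_total a b with h | h
      · exact Or.inl (Or.inr ⟨by tauto, h⟩)
      · exact Or.inr (Or.inr ⟨by tauto, h⟩)
    · exact Or.inr (Or.inl ⟨hb, ha⟩)
    · exact Or.inl (Or.inl ⟨ha, hb⟩)
    · rcases scLe_total a b with h | h
      · exact Or.inl (Or.inr ⟨by tauto, h⟩)
      · exact Or.inr (Or.inr ⟨by tauto, h⟩)

lemma scLe_lin : IsLin scLe :=
  ⟨scLe_refl, fun _ _ _ => scLe_trans, fun _ _ => scLe_antisymm, scLe_total⟩

lemma ioLe_iff_ioLe' (T : MergeTree) {a b : List Chir} (ha : a ∈ T.nodes)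
    (hb : b ∈ T.nodes) : ioLe T a b ↔ ioLe' T a b := by
  unfold ioLe ioLe' MergeTree.IsLeaf MergeTree.IsInner
  by_cases h1 : a ++ [Chir.L] ∈ T.nodes <;> by_cases h2 : b ++ [Chir.L] ∈ T.nodes <;>
    simp [ha, hb, h1, h2]

/-- Descendants are below ancestors in `ioLe'`. -/
lemma ioLe'_desc (T : MergeTree) {n m : List Chir} (hn : n ∈ T.nodes) (hm : m ∈ T.nodes)
    (h : n <+: m) : ioLe' T m n := by
  rcases leaf_or_inner T hn with hl | hi
  · rw [desc_eq_of_leaf T hl hm h]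
    exact (ioLe'_lin T).refl n
  · by_cases hmL : m ++ [Chir.L] ∈ T.nodes
    · exact Or.inr ⟨by simp [hmL, hi.2], scLe_of_prefix h⟩
    · exact Or.inl ⟨hmL, hi.2⟩

lemma scLe_desc {n m : List Chir} (h : n <+: m) : scLe m n := scLe_of_prefix h

end Sec4

section Sec5

variable (T : MergeTree)

def slist : List (List Chir) := T.nodes.sort simpLe

lemma slist_length : (slist T).length = 2 * T.innerCount + 1 := by
  rw [slist, Finset.length_sort, card_nodes]

def phi (i : Fin (2 * T.innerCount + 1)) : List Chir :=
  (slist T).get ⟨i.1, by rw [slist_length]; exact i.2⟩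

def nu (n : List Chir) : Fin (2 * T.innerCount + 1) :=
  ⟨min (@List.idxOf _ instBEqOfDecidableEq n (slist T)) (2 * T.innerCount), by omega⟩

lemma phi_mem (i : Fin (2 * T.innerCount + 1)) : phi T i ∈ T.nodes := by
  rw [← Finset.mem_sort simpLe]
  exact (slist T).get_mem _

lemma phi_inj {i j : Fin (2 * T.innerCount + 1)} (h : phi T i = phi T j) : i = j := by
  unfold phi at h
  have hnd : (slist T).Nodup := Finset.sort_nodup T.nodes simpLe
  rw [List.get_eq_getElem, List.get_eq_getElem, hnd.getElem_inj_iff] at h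
  exact Fin.ext h

lemma nu_val {n : List Chir} (hn : n ∈ T.nodes) :
    (nu T n).1 = @List.idxOf _ instBEqOfDecidableEq n (slist T) := by
  have hmem : n ∈ slist T := (Finset.mem_sort simpLe).2 hn
  have := (@List.idxOf_lt_length_iff _ instBEqOfDecidableEq _ _ _).2 hmem
  rw [slist_length] at this
  unfold nu
  simp only
  omega

lemma phi_nu {n : List Chir} (hn : n ∈ T.nodes) : phi T (nu T n) = n := by
  have hmem : n ∈ slist T := (Finset.mem_sort simpLe).2 hn
  have hlt := (@List.idxOf_lt_length_iff _ instBEqOfDecidableEq _ _ _).2 hmem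
  unfold phi
  have hv := nu_val T hn
  have : (⟨(nu T n).1, by rw [slist_length]; exact (nu T n).2⟩ : Fin (slist T).length)
      = ⟨@List.idxOf _ instBEqOfDecidableEq n (slist T), hlt⟩ := by
    exact Fin.ext hv
  rw [this]
  exact @List.idxOf_get _ instBEqOfDecidableEq _ _ _ hlt

lemma nu_phi (i : Fin (2 * T.innerCount + 1)) : nu T (phi T i) = i := by
  apply phi_inj T
  rw [phi_nu T (phi_mem T i)]

lemma phi_le_iff {i j : Fin (2 * T.innerCount + 1)} :
    i ≤ j ↔ simpLe (phi T i) (phi T j) := by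
  constructor
  · intro hij
    rcases eq_or_lt_of_le hij with rfl | hlt
    · exact simpLe_refl _
    · exact (Finset.pairwise_sort T.nodes simpLe).rel_get_of_lt (by exact hlt)
  · intro h
    by_contra hij
    push_neg at hij
    have h2 : simpLe (phi T j) (phi T i) :=
      (Finset.pairwise_sort T.nodes simpLe).rel_get_of_lt (by exact hij)
    have := phi_inj T (simpLe_antisymm h h2)
    omega

lemma nu_le_nu {m n : List Chir} (hm : m ∈ T.nodes) (hn : n ∈ T.nodes)
    (h : simpLe m n) : nu T m ≤ nu T n := by
  rw [phi_le_iff T (i := nu T m) (j := nu T n), phi_nu T hm, phi_nu T hn]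
  exact h

lemma nu_lt_nu {m n : List Chir} (hm : m ∈ T.nodes) (hn : n ∈ T.nodes)
    (h : simpLe m n) (hne : m ≠ n) : nu T m < nu T n := by
  rcases lt_or_eq_of_le (nu_le_nu T hm hn h) with h' | h'
  · exact h'
  · exact absurd (by rw [← phi_nu T hm, ← phi_nu T hn, h']) hne

lemma prefix_LR_false {p u : List Chir} (h1 : (p ++ [Chir.L]) <+: u)
    (h2 : (p ++ [Chir.R]) <+: u) : False := by
  obtain ⟨t1, e1⟩ := h1
  obtain ⟨t2, e2⟩ := h2
  rw [List.append_assoc] at e1 e2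
  have := List.append_cancel_left (e1.trans e2.symm)
  simp at this

/-- The block of descendants of a node is an index interval with ancestor boundary. -/
lemma subtree_block {n : List Chir} (hn : n ∈ T.nodes) :
    ∃ lo hi : Fin (2 * T.innerCount + 1),
      lo ≤ nu T n ∧ nu T n ≤ hi ∧
      (∀ i, lo ≤ i → i ≤ hi → n <+: phi T i) ∧
      (∀ i, n <+: phi T i → lo ≤ i ∧ i ≤ hi) ∧
      (∀ i, i.1 + 1 = lo.1 → (phi T i ++ [Chir.R]) <+: n) ∧
      (∀ i, hi.1 + 1 = i.1 → (phi T i ++ [Chir.L]) <+: n) := by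
  classical
  set I := Finset.univ.filter (fun i : Fin (2 * T.innerCount + 1) => n <+: phi T i)
    with hI
  have hIne : I.Nonempty := ⟨nu T n, by
    rw [hI, Finset.mem_filter]
    exact ⟨Finset.mem_univ _, by rw [phi_nu T hn]⟩⟩
  have hmemI : ∀ i, i ∈ I ↔ n <+: phi T i := fun i => by
    rw [hI, Finset.mem_filter]; simp
  refine ⟨I.min' hIne, I.max' hIne, ?_, ?_, ?_, ?_, ?_, ?_⟩
  · exact I.min'_le _ ((hmemI _).2 (by rw [phi_nu T hn]))
  · exact I.le_max' _ ((hmemI _).2 (by rw [phi_nu T hn]))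
  · intro i h1 h2
    have hlo := (hmemI _).1 (I.min'_mem hIne)
    have hhi := (hmemI _).1 (I.max'_mem hIne)
    exact simpLe_interval hlo hhi ((phi_le_iff T).1 h1) ((phi_le_iff T).1 h2)
  · intro i hi
    exact ⟨I.min'_le _ ((hmemI _).2 hi), I.le_max' _ ((hmemI _).2 hi)⟩
  · intro i hi1
    set m := phi T i with hm
    have hndesc : ¬ n <+: m := by
      intro hd
      have := (I.min'_le _ ((hmemI _).2 hd))
      omega
    have hiltn : i < nu T n := by
      have := I.min'_le _ ((hmemI _).2 (by rw [phi_nu T hn] : n <+: phi T (nu T n)))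
      rcases Nat.lt_or_ge i.1 (nu T n).1 with h | h
      · exact h
      · exfalso
        rcases Nat.eq_or_lt_of_le h with h' | h'
        · exact hndesc (by rw [hm, show i = nu T n from Fin.ext h'.symm, phi_nu T hn])
        · omega
    have hsle : simpLe m n := by
      rw [hm, ← phi_nu T hn]
      exact (phi_le_iff T).1 hiltn.le
    rcases hsle with heq | hL | hR | ⟨p, hpL, hpR⟩
    · exact absurd (heq ▸ List.prefix_refl n) hndesc
    · exact absurd (List.IsPrefix.trans (List.prefix_append n [Chir.L]) hL) hndesc
    · exact hR
    · exfalso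
      have hpmem : p ∈ T.nodes :=
        mem_of_prefix T n hn p (List.IsPrefix.trans (List.prefix_append p [Chir.R]) hpR)
      have hplen : p.length + 1 ≤ m.length := by
        have := hpL.length_le; simpa using this
      have hplen2 : p.length + 1 ≤ n.length := by
        have := hpR.length_le; simpa using this
      have h1 : nu T p < nu T n :=
        nu_lt_nu T hpmem hn (simpLe_of_right hpR) (fun e => by rw [e] at hplen2; omega)
      have h2 : i < nu T p := by
        have := nu_lt_nu T (phi_mem T i) hpmem (simpLe_of_left hpL)
          (fun e => by rw [hm, e] at hplen; omega)
        rwa [nu_phi] at this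
      -- p is inside the block
      have hp_in : n <+: p := by
        have hp1 : I.min' hIne ≤ nu T p := by
          have : (I.min' hIne).1 = i.1 + 1 := hi1.symm
          omega
        have hp2 : nu T p ≤ I.max' hIne := by
          have := I.le_max' _ ((hmemI _).2 (by rw [phi_nu T hn] : n <+: phi T (nu T n)))
          have : nu T n ≤ I.max' hIne := this
          omega
        have hlo := (hmemI _).1 (I.min'_mem hIne)
        have hhi := (hmemI _).1 (I.max'_mem hIne)
        have := simpLe_interval hlo hhi ((phi_le_iff T).1 hp1) ((phi_le_iff T).1 hp2)
        rwa [phi_nu T hpmem] at this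
      have := hp_in.length_le
      omega
  · intro i hi1
    set m := phi T i with hm
    have hndesc : ¬ n <+: m := by
      intro hd
      have := (I.le_max' _ ((hmemI _).2 hd))
      omega
    have hiltn : nu T n < i := by
      have := I.le_max' _ ((hmemI _).2 (by rw [phi_nu T hn] : n <+: phi T (nu T n)))
      rcases Nat.lt_or_ge (nu T n).1 i.1 with h | h
      · exact h
      · exfalso
        rcases Nat.eq_or_lt_of_le h with h' | h'
        · exact hndesc (by rw [hm, show i = nu T n from Fin.ext h', phi_nu T hn])
        · omega
    have hsle : simpLe n m := by
      rw [hm, ← phi_nu T hn]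
      exact (phi_le_iff T).1 hiltn.le
    rcases hsle with heq | hL | hR | ⟨p, hpL, hpR⟩
    · exact absurd (heq ▸ List.prefix_refl n) hndesc
    · exact hL
    · exact absurd (List.IsPrefix.trans (List.prefix_append n [Chir.R]) hR) hndesc
    · exfalso
      have hpmem : p ∈ T.nodes :=
        mem_of_prefix T n hn p (List.IsPrefix.trans (List.prefix_append p [Chir.L]) hpL)
      have hplen : p.length + 1 ≤ m.length := by
        have := hpR.length_le; simpa using this
      have hplen2 : p.length + 1 ≤ n.length := by
        have := hpL.length_le; simpa using this
      have h1 : nu T n < nu T p :=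
        nu_lt_nu T hn hpmem (simpLe_of_left hpL) (fun e => by rw [← e] at hplen2; omega)
      have h2 : nu T p < i := by
        have := nu_lt_nu T hpmem (phi_mem T i) (simpLe_of_right hpR)
          (fun e => by rw [hm, ← e] at hplen; omega)
        rwa [nu_phi] at this
      have hp_in : n <+: p := by
        have hp1 : I.min' hIne ≤ nu T p := by
          have := I.min'_le _ ((hmemI _).2 (by rw [phi_nu T hn] : n <+: phi T (nu T n)))
          have : I.min' hIne ≤ nu T n := this
          omega
        have hp2 : nu T p ≤ I.max' hIne := by
          have : i.1 = (I.max' hIne).1 + 1 := hi1.symm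
          omega
        have hlo := (hmemI _).1 (I.min'_mem hIne)
        have hhi := (hmemI _).1 (I.max'_mem hIne)
        have := simpLe_interval hlo hhi ((phi_le_iff T).1 hp1) ((phi_le_iff T).1 hp2)
        rwa [phi_nu T hpmem] at this
      have := hp_in.length_le
      omega

end Sec5

section Sec6

variable (T : MergeTree)

/-- Between two distinct leaves there is an inner node. -/
lemma inner_between {u v : List Chir} (hu : T.IsLeaf u) (hv : T.IsLeaf v)
    (h : simpLe u v) (hne : u ≠ v) :
    ∃ p ∈ T.nodes, simpLe u p ∧ p ≠ u ∧ simpLe p v ∧ p ≠ v := by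
  rcases h with heq | hL | hR | ⟨p, hpL, hpR⟩
  · exact absurd heq hne
  · have : v <+: u := List.IsPrefix.trans (List.prefix_append v [Chir.L]) hL
    exact absurd (desc_eq_of_leaf T hv hu.1 this) hne
  · have : u <+: v := List.IsPrefix.trans (List.prefix_append u [Chir.R]) hR
    exact absurd (desc_eq_of_leaf T hu hv.1 this).symm hne
  · have hpmem : p ∈ T.nodes :=
      mem_of_prefix T u hu.1 p (List.IsPrefix.trans (List.prefix_append p [Chir.L]) hpL)
    refine ⟨p, hpmem, simpLe_of_left hpL, ?_, simpLe_of_right hpR, ?_⟩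
    · intro e
      have := hpL.length_le
      rw [e] at this
      simp at this
    · intro e
      have := hpR.length_le
      rw [e] at this
      simp at this

/-- Between two distinct inner nodes there is a leaf. -/
lemma leaf_between {a b : List Chir} (ha : T.IsInner a) (hb : T.IsInner b)
    (h : simpLe a b) (hne : a ≠ b) :
    ∃ u ∈ T.nodes, T.IsLeaf u ∧ simpLe a u ∧ u ≠ a ∧ simpLe u b ∧ u ≠ b := by
  have haR : a ++ [Chir.R] ∈ T.nodes := child_mem T ha Chir.R
  have hbL : b ++ [Chir.L] ∈ T.nodes := child_mem T hb Chir.L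
  rcases h with heq | hL | hR | ⟨p, hpL, hpR⟩
  · exact absurd heq hne
  · -- b ++ [L] <+: a : a in left subtree of b; take leaf under a ++ [R]
    obtain ⟨u, humem, hud, hul⟩ := exists_leaf_desc T haR
    have hau : a ++ [Chir.R] <+: u := hud
    refine ⟨u, humem, hul, simpLe_of_right hau, ?_, ?_, ?_⟩
    · intro e
      have := hau.length_le; rw [e] at this; simp at this
    · have : b ++ [Chir.L] <+: u :=
        hL.trans (List.IsPrefix.trans (List.prefix_append a [Chir.R]) hau)
      exact simpLe_of_left this
    · intro e
      have h1 := hL.length_le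
      have h2 := hau.length_le
      rw [e] at h2
      simp at h1 h2
      omega
  · -- a ++ [R] <+: b : b in right subtree of a; take leaf under b ++ [L]
    obtain ⟨u, humem, hud, hul⟩ := exists_leaf_desc T hbL
    have hbu : b ++ [Chir.L] <+: u := hud
    refine ⟨u, humem, hul, ?_, ?_, simpLe_of_left hbu, ?_⟩
    · have : a ++ [Chir.R] <+: u :=
        hR.trans (List.IsPrefix.trans (List.prefix_append b [Chir.L]) hbu)
      exact simpLe_of_right this
    · intro e
      have h1 := hR.length_le
      have h2 := hbu.length_le
      rw [e] at h2
      simp at h1 h2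
      omega
    · intro e
      have := hbu.length_le; rw [e] at this; simp at this
  · -- p splits a and b; take leaf under a ++ [R]
    obtain ⟨u, humem, hud, hul⟩ := exists_leaf_desc T haR
    have hau : a ++ [Chir.R] <+: u := hud
    refine ⟨u, humem, hul, simpLe_of_right hau, ?_, ?_, ?_⟩
    · intro e
      have := hau.length_le; rw [e] at this; simp at this
    · have hpu : p ++ [Chir.L] <+: u :=
        hpL.trans (List.IsPrefix.trans (List.prefix_append a [Chir.R]) hau)
      exact Or.inr (Or.inr (Or.inr ⟨p, hpu, hpR⟩))
    · intro e
      have hpu : p ++ [Chir.L] <+: u :=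
        hpL.trans (List.IsPrefix.trans (List.prefix_append a [Chir.R]) hau)
      rw [e] at hpu
      exact prefix_LR_false hpu hpR

/-- The first node in the simplex order is a leaf. -/
lemma phi_zero_leaf : T.IsLeaf (phi T ⟨0, by omega⟩) := by
  rcases leaf_or_inner T (phi_mem T ⟨0, by omega⟩) with h | h
  · exact h
  · exfalso
    obtain ⟨u, humem, hud, hul⟩ := exists_leaf_desc T (child_mem T h Chir.L)
    have h1 : simpLe u (phi T ⟨0, by omega⟩) := simpLe_of_left hud
    have h2 : u ≠ phi T ⟨0, by omega⟩ := by
      intro e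
      have hlen := hud.length_le
      rw [e] at hlen
      simp at hlen
    have h3 := nu_lt_nu T humem (phi_mem T ⟨0, by omega⟩) h1 h2
    rw [nu_phi] at h3
    rw [Fin.lt_def] at h3
    simp at h3

/-- Adjacent nodes in the simplex order: not both leaves. -/
lemma adj_not_both_leaf {i j : Fin (2 * T.innerCount + 1)} (hij : i.1 + 1 = j.1)
    (hi : T.IsLeaf (phi T i)) (hj : T.IsLeaf (phi T j)) : False := by
  have hne : phi T i ≠ phi T j := fun e => by have := phi_inj T e; omega
  have hle : simpLe (phi T i) (phi T j) := (phi_le_iff T).1 (by omega)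
  obtain ⟨p, hpmem, h1, h2, h3, h4⟩ := inner_between T hi hj hle hne
  have ha := nu_lt_nu T (phi_mem T i) hpmem h1 (fun e => h2 e.symm)
  have hb := nu_lt_nu T hpmem (phi_mem T j) h3 h4
  rw [nu_phi] at ha
  rw [nu_phi] at hb
  omega

/-- Adjacent nodes in the simplex order: not both inner. -/
lemma adj_not_both_inner {i j : Fin (2 * T.innerCount + 1)} (hij : i.1 + 1 = j.1)
    (hi : T.IsInner (phi T i)) (hj : T.IsInner (phi T j)) : False := by
  have hne : phi T i ≠ phi T j := fun e => by have := phi_inj T e; omega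
  have hle : simpLe (phi T i) (phi T j) := (phi_le_iff T).1 (by omega)
  obtain ⟨u, humem, hul, h1, h2, h3, h4⟩ := leaf_between T hi hj hle hne
  have ha := nu_lt_nu T (phi_mem T i) humem h1 (fun e => h2 e.symm)
  have hb := nu_lt_nu T humem (phi_mem T j) h3 h4
  rw [nu_phi] at ha
  rw [nu_phi] at hb
  omega

/-- Parity: even positions are leaves, odd positions are inner nodes. -/
lemma parity : ∀ k, ∀ h : k < 2 * T.innerCount + 1,
    (T.IsLeaf (phi T ⟨k, h⟩) ↔ k % 2 = 0) := by
  intro k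
  induction k with
  | zero => intro h; simpa using phi_zero_leaf T
  | succ k ih =>
    intro h
    have hk : k < 2 * T.innerCount + 1 := by omega
    have ihk := ih hk
    rcases leaf_or_inner T (phi_mem T ⟨k, hk⟩) with hl | hi <;>
      rcases leaf_or_inner T (phi_mem T ⟨k + 1, h⟩) with hl' | hi'
    · exact absurd (adj_not_both_leaf T (by simp) hl hl') not_false
    · have hk0 : k % 2 = 0 := ihk.1 hl
      constructor
      · intro h'; exact absurd ⟨h', hi'⟩ (not_leaf_and_inner T)
      · intro h'; omega
    · have hk1 : ¬ k % 2 = 0 := fun e => (not_leaf_and_inner T) ⟨ihk.2 e, hi⟩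
      constructor
      · intro _; omega
      · intro _; exact hl'
    · exact absurd (adj_not_both_inner T (by simp) hi hi') not_false

lemma parity' (i : Fin (2 * T.innerCount + 1)) :
    T.IsLeaf (phi T i) ↔ i.1 % 2 = 0 := by
  exact parity T i.1 i.2

end Sec6

section Sec7

variable (T : MergeTree) (r : List Chir → List Chir → Prop) [DecidableRel r]

/-- Neighbors of an inner node in the simplex order are its descendants. -/
lemma neighbor_desc {n : List Chir} (hin : T.IsInner n) (i : Fin (2 * T.innerCount + 1))
    (h : i.1 + 1 = (nu T n).1 ∨ (nu T n).1 + 1 = i.1) : n <+: phi T i := by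
  obtain ⟨lo, hi, hlo, hhi, hcont, hblk, -, -⟩ := subtree_block T hin.1
  have hLmem := child_mem T hin Chir.L
  have hRmem := child_mem T hin Chir.R
  have hbL := hblk (nu T (n ++ [Chir.L]))
    (by rw [phi_nu T hLmem]; exact List.prefix_append n [Chir.L])
  have hbR := hblk (nu T (n ++ [Chir.R]))
    (by rw [phi_nu T hRmem]; exact List.prefix_append n [Chir.R])
  have hl1 : nu T (n ++ [Chir.L]) < nu T n := by
    apply nu_lt_nu T hLmem hin.1 (simpLe_of_left (List.prefix_refl _))
    intro e
    have := congrArg List.length e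
    simp at this
  have hr1 : nu T n < nu T (n ++ [Chir.R]) := by
    apply nu_lt_nu T hin.1 hRmem (simpLe_of_right (List.prefix_refl _))
    intro e
    have := congrArg List.length e
    simp at this
  rw [Fin.le_def] at hbL hbR hlo hhi
  rw [Fin.lt_def] at hl1 hr1
  apply hcont <;> rw [Fin.le_def] <;> omega

variable {r} (hr : IsLin r)
  (hdesc : ∀ m n : List Chir, m ∈ T.nodes → n ∈ T.nodes → n <+: m → r m n)
  (hmin : ∀ n : List Chir, T.IsInner n → ∀ m2 ∈ T.nodes, (n ++ [(chir n).other]) <+: m2 →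
      ∃ m1 ∈ T.nodes, (n ++ [chir n]) <+: m1 ∧ r m1 m2 ∧ m1 ≠ m2)

include hr hdesc in
lemma path_dmf_generic : IsPathDMFallCrit (fun i => rnk T.nodes r (phi T i)) := by
  constructor
  · intro i j h
    exact phi_inj T (rnk_inj hr (phi_mem T i) (phi_mem T j) h)
  · intro j h
    set i1 : Fin (2 * T.innerCount + 1) := ⟨2 * j + 1, by omega⟩ with hi1
    have hodd : ¬ (i1.1 % 2 = 0) := by
      show ¬ ((2 * j + 1) % 2 = 0)
      omega
    have hinner : T.IsInner (phi T i1) :=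
      (leaf_or_inner T (phi_mem T i1)).resolve_left (fun hl => hodd ((parity' T i1).1 hl))
    have hnu : nu T (phi T i1) = i1 := nu_phi T i1
    constructor
    · have hd : phi T i1 <+: phi T ⟨2 * j, by omega⟩ := by
        apply neighbor_desc T hinner
        rw [hnu, hi1]
        left; rfl
      have := hdesc _ _ (phi_mem T ⟨2 * j, by omega⟩) (phi_mem T i1) hd
      exact (rnk_le_iff hr (phi_mem T _) (phi_mem T i1)).1 this
    · have hd : phi T i1 <+: phi T ⟨2 * j + 2, by omega⟩ := by
        apply neighbor_desc T hinner
        rw [hnu, hi1]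
        right; rfl
      have := hdesc _ _ (phi_mem T ⟨2 * j + 2, by omega⟩) (phi_mem T i1) hd
      exact (rnk_le_iff hr (phi_mem T _) (phi_mem T i1)).1 this

include hr hdesc hmin in
lemma induced_generic : InducedMlPath (fun i => rnk T.nodes r (phi T i)) T (nu T) := by
  classical
  refine ⟨?_, ?_, ?_, ?_, ?_⟩
  · intro n hn n' hn' h
    rw [← phi_nu T hn, ← phi_nu T hn', h]
  · intro n hn
    have := parity' T (nu T n)
    rwa [phi_nu T hn] at this
  · intro ⟨i, hi⟩
    have hic : 1 ≤ T.innerCount := by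
      by_contra h
      have : i.1 < 1 := by omega
      omega
    have hinner : T.IsInner [] := by
      have hpos : 0 < (T.nodes.filter fun n => n ++ [Chir.L] ∈ T.nodes).card := hic
      obtain ⟨m, hm⟩ := Finset.card_pos.1 hpos
      rw [Finset.mem_filter] at hm
      exact root_inner_of_inner T ⟨hm.1, hm.2⟩
    refine ⟨hinner, fun i _ => ?_⟩
    have := hdesc (phi T i) [] (phi_mem T i) T.root_mem (List.nil_prefix)
    have h2 := (rnk_le_iff hr (phi_mem T i) T.root_mem).1 this
    rwa [← phi_nu T T.root_mem] at h2
  · intro h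
    have hic : T.innerCount = 0 := by
      by_contra h'
      exact h ⟨⟨1, by omega⟩, rfl⟩
    have hcard : T.nodes.card = 1 := by rw [card_nodes, hic]
    obtain ⟨a, ha⟩ := Finset.card_eq_one.1 hcard
    rw [ha]
    have := T.root_mem
    rw [ha, Finset.mem_singleton] at this
    rw [this]
  · intro n hin
    have hn := hin.1
    have hLmem := child_mem T hin Chir.L
    have hRmem := child_mem T hin Chir.R
    have hodd : (nu T n).1 % 2 = 1 := by
      have hpar := parity' T (nu T n)
      rw [phi_nu T hn] at hpar
      have h2 : ¬ T.IsLeaf n := fun hl => not_leaf_and_inner T ⟨hl, hin⟩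
      have h3 : ¬ ((nu T n).1 % 2 = 0) := fun e => h2 (hpar.2 e)
      omega
    refine ⟨hodd, ?_⟩
    obtain ⟨lo, hi, hlo, hhi, hcont, hblk, hbdL, hbdR⟩ := subtree_block T hn
    -- positions of the children
    have hilq : lo ≤ nu T (n ++ [Chir.L]) ∧ nu T (n ++ [Chir.L]) ≤ hi :=
      hblk _ (by rw [phi_nu T hLmem]; exact List.prefix_append n [Chir.L])
    have hirq : lo ≤ nu T (n ++ [Chir.R]) ∧ nu T (n ++ [Chir.R]) ≤ hi :=
      hblk _ (by rw [phi_nu T hRmem]; exact List.prefix_append n [Chir.R])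
    have hil_lt : nu T (n ++ [Chir.L]) < nu T n := by
      apply nu_lt_nu T hLmem hn (simpLe_of_left (List.prefix_refl _))
      intro e
      have := congrArg List.length e
      simp at this
    have hir_gt : nu T n < nu T (n ++ [Chir.R]) := by
      apply nu_lt_nu T hn hRmem (simpLe_of_right (List.prefix_refl _))
      intro e
      have := congrArg List.length e
      simp at this
    rw [Fin.le_def] at hilq hirq hlo hhi
    obtain ⟨hilq1, hilq2⟩ := hilq
    obtain ⟨hirq1, hirq2⟩ := hirq
    rw [Fin.lt_def] at hil_lt hir_gt
    -- membership in the block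
    have hdesci : ∀ i : Fin (2 * T.innerCount + 1), lo.1 ≤ i.1 → i.1 ≤ hi.1 →
        n <+: phi T i := by
      intro i h1 h2
      exact hcont i (Fin.le_def.2 h1) (Fin.le_def.2 h2)
    have hne_phi : ∀ i : Fin (2 * T.innerCount + 1), i.1 ≠ (nu T n).1 → phi T i ≠ n := by
      intro i h e
      rw [← phi_nu T hn] at e
      have := phi_inj T e
      rw [this] at h
      exact h rfl
    -- strict comparison inside the block
    have hstrict : ∀ i : Fin (2 * T.innerCount + 1), lo.1 ≤ i.1 → i.1 ≤ hi.1 →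
        i.1 ≠ (nu T n).1 → rnk T.nodes r (phi T i) < rnk T.nodes r n := by
      intro i h1 h2 h3
      have hd := hdesci i h1 h2
      have hne := hne_phi i h3
      exact (rnk_lt_iff hr (phi_mem T i) hn).1 ⟨hdesc _ _ (phi_mem T i) hn hd, hne⟩
    -- left-siders are under the left child
    have hLside : ∀ i : Fin (2 * T.innerCount + 1), lo.1 ≤ i.1 → i.1 < (nu T n).1 →
        (n ++ [Chir.L]) <+: phi T i := by
      intro i h1 h2
      have hd := hdesci i h1 (by omega)
      rcases prefix_cases hd with he | hL' | hR'
      · exact absurd he (hne_phi i (by omega))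
      · exact hL'
      · exfalso
        have := nu_lt_nu T hn (phi_mem T i) (simpLe_of_right hR')
          (fun e => hne_phi i (by omega) e.symm)
        rw [nu_phi, Fin.lt_def] at this
        omega
    have hRside : ∀ i : Fin (2 * T.innerCount + 1), (nu T n).1 < i.1 → i.1 ≤ hi.1 →
        (n ++ [Chir.R]) <+: phi T i := by
      intro i h1 h2
      have hd := hdesci i (by omega) h2
      rcases prefix_cases hd with he | hL' | hR'
      · exact absurd he (hne_phi i (by omega))
      · exfalso
        have := nu_lt_nu T (phi_mem T i) hn (simpLe_of_left hL')
          (fun e => hne_phi i (by omega) e)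
        rw [nu_phi, Fin.lt_def] at this
        omega
      · exact hR'
    refine ⟨lo, hi, by omega, by omega, ?_, ?_, ?_, ?_, ?_⟩
    · intro i h1 h2
      simp only
      rw [phi_nu T hn]
      exact hstrict i h1 (by omega) (by omega)
    · intro i h1 h2
      simp only
      rw [phi_nu T hn]
      exact hstrict i (by omega) h2 (by omega)
    · intro i h1
      simp only
      rw [phi_nu T hn]
      have hanc := hbdL i h1
      have hpre : phi T i <+: n :=
        List.IsPrefix.trans (List.prefix_append (phi T i) [Chir.R]) hanc
      exact (rnk_le_iff hr hn (phi_mem T i)).1 (hdesc _ _ hn (phi_mem T i) hpre)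
    · intro i h1
      simp only
      rw [phi_nu T hn]
      have hanc := hbdR i h1
      have hpre : phi T i <+: n :=
        List.IsPrefix.trans (List.prefix_append (phi T i) [Chir.L]) hanc
      exact (rnk_le_iff hr hn (phi_mem T i)).1 (hdesc _ _ hn (phi_mem T i) hpre)
    refine ⟨nu T (n ++ [Chir.L]), nu T (n ++ [Chir.R]), by omega, by omega, by omega,
      by omega, ?_, ?_, ?_⟩
    · intro i h1 h2
      simp only
      rw [phi_nu T hLmem]
      exact (rnk_le_iff hr (phi_mem T i) hLmem).1
        (hdesc _ _ (phi_mem T i) hLmem (hLside i h1 h2))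
    · intro i h1 h2
      simp only
      rw [phi_nu T hRmem]
      exact (rnk_le_iff hr (phi_mem T i) hRmem).1
        (hdesc _ _ (phi_mem T i) hRmem (hRside i h1 h2))
    -- the minima
    classical
    set JL := Finset.univ.filter
      (fun i : Fin (2 * T.innerCount + 1) => lo.1 ≤ i.1 ∧ i.1 < (nu T n).1) with hJL
    set JR := Finset.univ.filter
      (fun i : Fin (2 * T.innerCount + 1) => (nu T n).1 < i.1 ∧ i.1 ≤ hi.1) with hJR
    have hJLne : JL.Nonempty := ⟨nu T (n ++ [Chir.L]), by
      rw [hJL, Finset.mem_filter]; exact ⟨Finset.mem_univ _, by omega, by omega⟩⟩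
    have hJRne : JR.Nonempty := ⟨nu T (n ++ [Chir.R]), by
      rw [hJR, Finset.mem_filter]; exact ⟨Finset.mem_univ _, by omega, by omega⟩⟩
    obtain ⟨ml, hmlJ, hml⟩ := Finset.exists_min_image JL
      (fun i => rnk T.nodes r (phi T i)) hJLne
    obtain ⟨mr, hmrJ, hmr⟩ := Finset.exists_min_image JR
      (fun i => rnk T.nodes r (phi T i)) hJRne
    rw [hJL, Finset.mem_filter] at hmlJ
    rw [hJR, Finset.mem_filter] at hmrJ
    have hmlJ' := hmlJ.2
    have hmrJ' := hmrJ.2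
    have hmlmin : ∀ i : Fin (2 * T.innerCount + 1), lo.1 ≤ i.1 → i.1 < (nu T n).1 →
        rnk T.nodes r (phi T ml) ≤ rnk T.nodes r (phi T i) := by
      intro i h1 h2
      exact hml i (by rw [hJL, Finset.mem_filter]; exact ⟨Finset.mem_univ _, h1, h2⟩)
    have hmrmin : ∀ i : Fin (2 * T.innerCount + 1), (nu T n).1 < i.1 → i.1 ≤ hi.1 →
        rnk T.nodes r (phi T mr) ≤ rnk T.nodes r (phi T i) := by
      intro i h1 h2
      exact hmr i (by rw [hJR, Finset.mem_filter]; exact ⟨Finset.mem_univ _, h1, h2⟩)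
    refine ⟨ml, mr, by omega, by omega, by omega, by omega, hmlmin, hmrmin, ?_⟩
    cases hc : chir n
    · -- chir n = L : the minimum is on the left side
      left
      refine ⟨?_, rfl, rfl⟩
      have hpre : (n ++ [Chir.L.other]) <+: phi T mr := hRside mr hmrJ'.1 hmrJ'.2
      have hmin' := hmin n hin
      rw [hc] at hmin'
      obtain ⟨m1, hm1mem, hm1pre, hm1r, hm1ne⟩ := hmin' (phi T mr) (phi_mem T mr) hpre
      have hm1blk := hblk (nu T m1)
        (by rw [phi_nu T hm1mem]
            exact List.IsPrefix.trans (List.prefix_append n [Chir.L]) hm1pre)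
      rw [Fin.le_def, Fin.le_def] at hm1blk
      have hm1lt : (nu T m1).1 < (nu T n).1 := by
        have := nu_lt_nu T hm1mem hn (simpLe_of_left hm1pre)
          (fun e => by have := hm1pre.length_le; rw [e] at this; simp at this)
        rwa [Fin.lt_def] at this
      calc rnk T.nodes r (phi T ml) ≤ rnk T.nodes r (phi T (nu T m1)) :=
            hmlmin _ hm1blk.1 hm1lt
        _ = rnk T.nodes r m1 := by rw [phi_nu T hm1mem]
        _ < rnk T.nodes r (phi T mr) :=
            (rnk_lt_iff hr hm1mem (phi_mem T mr)).1 ⟨hm1r, hm1ne⟩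
    · -- chir n = R : the minimum is on the right side
      right
      refine ⟨?_, rfl, rfl⟩
      have hpre : (n ++ [Chir.R.other]) <+: phi T ml := hLside ml hmlJ'.1 hmlJ'.2
      have hmin' := hmin n hin
      rw [hc] at hmin'
      obtain ⟨m1, hm1mem, hm1pre, hm1r, hm1ne⟩ := hmin' (phi T ml) (phi_mem T ml) hpre
      have hm1blk := hblk (nu T m1)
        (by rw [phi_nu T hm1mem]
            exact List.IsPrefix.trans (List.prefix_append n [Chir.R]) hm1pre)
      rw [Fin.le_def, Fin.le_def] at hm1blk
      have hm1lt : (nu T n).1 < (nu T m1).1 := by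
        have := nu_lt_nu T hn hm1mem (simpLe_of_right hm1pre)
          (fun e => by have := hm1pre.length_le; rw [← e] at this; simp at this)
        rwa [Fin.lt_def] at this
      calc rnk T.nodes r (phi T mr) ≤ rnk T.nodes r (phi T (nu T m1)) :=
            hmrmin _ hm1lt hm1blk.2
        _ = rnk T.nodes r m1 := by rw [phi_nu T hm1mem]
        _ < rnk T.nodes r (phi T ml) :=
            (rnk_lt_iff hr hm1mem (phi_mem T ml)).1 ⟨hm1r, hm1ne⟩

end Sec7

section Sec8

variable (T : MergeTree)

lemma hmin_scLe : ∀ n : List Chir, T.IsInner n → ∀ m2 ∈ T.nodes,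
    (n ++ [(chir n).other]) <+: m2 →
    ∃ m1 ∈ T.nodes, (n ++ [chir n]) <+: m1 ∧ scLe m1 m2 ∧ m1 ≠ m2 := by
  intro n hin m2 hm2 hpre
  obtain ⟨t, rfl⟩ := hpre
  refine ⟨n ++ [chir n], child_mem T hin (chir n), List.prefix_refl _, ?_, ?_⟩
  · have := scLe_chir_side n [] t
    simpa using this
  · intro e
    have hlen := congrArg List.length e
    simp at hlen
    subst hlen
    simp at e
    exact chir_ne_other (chir n) e

lemma hmin_ioLe' : ∀ n : List Chir, T.IsInner n → ∀ m2 ∈ T.nodes,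
    (n ++ [(chir n).other]) <+: m2 →
    ∃ m1 ∈ T.nodes, (n ++ [chir n]) <+: m1 ∧ ioLe' T m1 m2 ∧ m1 ≠ m2 := by
  intro n hin m2 hm2 hpre
  obtain ⟨u, humem, hud, hul⟩ := exists_leaf_desc T (child_mem T hin (chir n))
  refine ⟨u, humem, hud, ?_, ?_⟩
  · by_cases h2 : m2 ++ [Chir.L] ∈ T.nodes
    · exact Or.inl ⟨hul.2, h2⟩
    · refine Or.inr ⟨by simp [hul.2, h2], ?_⟩
      obtain ⟨t1, rfl⟩ := hud
      obtain ⟨t2, rfl⟩ := hpre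
      have := scLe_chir_side n t1 t2
      simpa using this
  · intro e
    rw [← e] at hpre
    cases hc : chir n
    · rw [hc] at hud hpre
      exact prefix_LR_false hud (by simpa [Chir.other] using hpre)
    · rw [hc] at hud hpre
      exact prefix_LR_false (by simpa [Chir.other] using hpre) hud

lemma ml_generic {r : List Chir → List Chir → Prop} [DecidableRel r] (hr : IsLin r)
    (rT : List Chir → List Chir → Prop)
    (hiff : ∀ a ∈ T.nodes, ∀ b ∈ T.nodes, (rT a b ↔ r a b)) :
    IsMorseLabeling T rT (rnk T.nodes r) := by
  refine ⟨?_, ?_, ?_, ?_⟩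
  · intro n hn
    rw [← card_nodes]
    exact rnk_lt_card hr hn
  · intro k hk
    rw [← card_nodes] at hk
    exact rnk_surj hr hk
  · intro a ha b hb h
    exact rnk_inj hr ha hb h
  · intro a ha b hb
    exact (hiff a ha b hb).trans (rnk_le_iff hr ha hb)

end Sec8

theorem stmt18' (T : MergeTree) :
    ∃ (labio labsc : List Chir → ℕ) (φ : Fin (2 * T.innerCount + 1) → List Chir),
      IsMorseLabeling T (ioLe T) labio ∧ IsMorseLabeling T scLe labsc ∧
      IsSimplexIso T φ ∧
      IsPathDMFallCrit (fun i => labio (φ i)) ∧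
      IsPathDMFallCrit (fun i => labsc (φ i)) ∧
      (∃ ν, InducedMlPath (fun i => labio (φ i)) T ν) ∧
      (∃ ν, InducedMlPath (fun i => labsc (φ i)) T ν) := by
  classical
  have hdesc_io : ∀ m n : List Chir, m ∈ T.nodes → n ∈ T.nodes → n <+: m → ioLe' T m n :=
    fun m n hm hn h => ioLe'_desc T hn hm h
  have hdesc_sc : ∀ m n : List Chir, m ∈ T.nodes → n ∈ T.nodes → n <+: m → scLe m n :=
    fun m n _ _ h => scLe_of_prefix h
  refine ⟨rnk T.nodes (ioLe' T), rnk T.nodes scLe, phi T, ?_, ?_, ?_, ?_, ?_, ?_, ?_⟩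
  · exact ml_generic T (ioLe'_lin T) (ioLe T) (fun a ha b hb => ioLe_iff_ioLe' T ha hb)
  · exact ml_generic T scLe_lin scLe (fun a ha b hb => Iff.rfl)
  · exact ⟨phi_mem T, fun n hn => ⟨nu T n, phi_nu T hn⟩, fun i j => phi_le_iff T⟩
  · exact path_dmf_generic T (ioLe'_lin T) hdesc_io
  · exact path_dmf_generic T scLe_lin hdesc_sc
  · exact ⟨nu T, induced_generic T (ioLe'_lin T) hdesc_io (hmin_ioLe' T)⟩
  · exact ⟨nu T, induced_generic T scLe_lin hdesc_sc (hmin_scLe T)⟩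

/-- Every merge tree `T` is represented by a discrete Morse function, with only
critical cells, on a path with `i(T)` 1-simplices; indeed both the induced
index-ordered dMf and the induced sublevel-connected dMf realize `T` as their induced
merge tree. -/
theorem stmt18 (T : MergeTree) :
    ∃ (labio labsc : List Chir → ℕ) (φ : Fin (2 * T.innerCount + 1) → List Chir),
      IsMorseLabeling T (ioLe T) labio ∧ IsMorseLabeling T scLe labsc ∧
      IsSimplexIso T φ ∧
      IsPathDMFallCrit (fun i => labio (φ i)) ∧
      IsPathDMFallCrit (fun i => labsc (φ i)) ∧
      (∃ ν, InducedMlPath (fun i => labio (φ i)) T ν) ∧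
      (∃ ν, InducedMlPath (fun i => labsc (φ i)) T ν) := by
  exact stmt18' T
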